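/- Let Q(x) = (1/√(2π)) ∫_x^∞ exp(−u²/2) du. Let a > 1, ν > 0, and let R be a real number with R > 2·log₂ a and C − R > 2·√(ν·ln a). Then there exists N such that for every integer n ≥ N: Q(√(n/ν)·(C − R)) · (1 + a^(2n)) < 1 and n · (R − 2·log₂ a) > 2. -/

import Mathlib

open MeasureTheory

noncomputable def gaussQ (x : ℝ) : ℝ :=
  (1 / Real.sqrt (2 * Real.pi)) * ∫ u in Set.Ioi x, Real.exp (-u ^ 2 / 2)

lemma integral_exp_neg_mul_Ioi' {c : ℝ} (hc : 0 < c) (x : ℝ) :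
    ∫ u in Set.Ioi x, Real.exp (-(c * u)) = Real.exp (-(c * x)) / c := by
  have hderiv : ∀ u ∈ Set.Ici x,
      HasDerivAt (fun u : ℝ => -Real.exp (-(c * u)) / c) (Real.exp (-(c * u))) u := by
    intro u _
    have h1 : HasDerivAt (fun u : ℝ => -(c * u)) (-c) u := by
      simpa using ((hasDerivAt_id u).const_mul c).fun_neg
    have h2 := (h1.exp).fun_neg.div_const c
    refine h2.congr_deriv ?_
    field_simp
  have hint : IntegrableOn (fun u : ℝ => Real.exp (-(c * u))) (Set.Ioi x) := by
    simpa [neg_mul] using exp_neg_integrableOn_Ioi x hc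
  have hmul : Filter.Tendsto (fun u : ℝ => c * u) Filter.atTop Filter.atTop :=
    Filter.Tendsto.const_mul_atTop hc Filter.tendsto_id
  have htend : Filter.Tendsto (fun u : ℝ => -Real.exp (-(c * u)) / c)
      Filter.atTop (nhds 0) := by
    have h0 : Filter.Tendsto (fun u : ℝ => Real.exp (-(c * u))) Filter.atTop (nhds 0) :=
      Real.tendsto_exp_atBot.comp ((Filter.tendsto_neg_atTop_atBot).comp hmul)
    simpa using (h0.neg.div_const c)
  have := integral_Ioi_of_hasDerivAt_of_tendsto' hderiv hint htend
  rw [this]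
  ring

lemma gaussQ_le_exp {x : ℝ} (hx : 2 ≤ x) : gaussQ x ≤ Real.exp (-x ^ 2 / 2) := by
  have hx0 : 0 < x := lt_of_lt_of_le two_pos hx
  have hint1 : IntegrableOn (fun u : ℝ => Real.exp (-u ^ 2 / 2)) (Set.Ioi x) := by
    have h := (integrable_exp_neg_mul_sq (by norm_num : (0:ℝ) < 1/2)).integrableOn
      (s := Set.Ioi x)
    have he : (fun u : ℝ => Real.exp (-u ^ 2 / 2)) =
        fun u : ℝ => Real.exp (-(1/2) * u ^ 2) := by
      funext u; ring_nf
    rw [he]; exact h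
  have hint2 : IntegrableOn (fun u : ℝ => Real.exp (-(x / 2 * u))) (Set.Ioi x) := by
    simpa [neg_mul] using exp_neg_integrableOn_Ioi x (by positivity : (0:ℝ) < x / 2)
  have hmono : ∫ u in Set.Ioi x, Real.exp (-u ^ 2 / 2)
      ≤ ∫ u in Set.Ioi x, Real.exp (-(x / 2 * u)) := by
    refine setIntegral_mono_on hint1 hint2 measurableSet_Ioi ?_
    intro u hu
    have hu' : x < u := hu
    apply Real.exp_le_exp.mpr
    nlinarith
  have hval : ∫ u in Set.Ioi x, Real.exp (-(x / 2 * u))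
      = Real.exp (-(x / 2 * x)) / (x / 2) :=
    integral_exp_neg_mul_Ioi' (by positivity) x
  have hnn : 0 ≤ ∫ u in Set.Ioi x, Real.exp (-u ^ 2 / 2) :=
    setIntegral_nonneg measurableSet_Ioi fun u _ => (Real.exp_pos _).le
  have hc : 1 / Real.sqrt (2 * Real.pi) ≤ 1 := by
    rw [div_le_one (by positivity)]
    rw [show (1:ℝ) = Real.sqrt 1 by simp]
    exact Real.sqrt_le_sqrt (by nlinarith [Real.pi_gt_three])
  have h1 : gaussQ x ≤ ∫ u in Set.Ioi x, Real.exp (-u ^ 2 / 2) := by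
    unfold gaussQ
    nlinarith
  refine h1.trans (hmono.trans ?_)
  rw [hval]
  have heq : -(x / 2 * x) = -x ^ 2 / 2 := by ring
  rw [heq]
  rw [div_le_iff₀ (by positivity)]
  nlinarith [Real.exp_pos (-x ^ 2 / 2)]

theorem stmt_14 (a ν C R : ℝ) (ha : 1 < a) (hν : 0 < ν)
    (hR : R > 2 * Real.logb 2 a) (hCR : C - R > 2 * Real.sqrt (ν * Real.log a)) :
    ∃ N : ℕ, ∀ n : ℕ, N ≤ n →
      gaussQ (Real.sqrt ((n : ℝ) / ν) * (C - R)) * (1 + a ^ (2 * n)) < 1 ∧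
      (n : ℝ) * (R - 2 * Real.logb 2 a) > 2 := by
  set D := C - R with hDdef
  have hla : 0 < Real.log a := Real.log_pos ha
  have hs : 0 ≤ Real.sqrt (ν * Real.log a) := Real.sqrt_nonneg _
  have hD : 0 < D := lt_of_le_of_lt (by positivity) hCR
  have hD2 : 4 * (ν * Real.log a) < D ^ 2 := by
    have h := Real.sq_sqrt (by positivity : (0:ℝ) ≤ ν * Real.log a)
    nlinarith
  set δ : ℝ := D ^ 2 / (2 * ν) - 2 * Real.log a with hδdef
  have hδ : 0 < δ := by
    rw [hδdef, sub_pos, lt_div_iff₀ (by positivity)]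
    nlinarith
  set ρ : ℝ := R - 2 * Real.logb 2 a with hρdef
  have hρ : 0 < ρ := by rw [hρdef]; linarith
  obtain ⟨N, hN⟩ := exists_nat_gt (max (max (4 * ν / D ^ 2) (Real.log 2 / δ)) (2 / ρ))
  refine ⟨N, fun n hn => ?_⟩
  have hnN : (max (max (4 * ν / D ^ 2) (Real.log 2 / δ)) (2 / ρ)) < (n : ℝ) :=
    lt_of_lt_of_le hN (by exact_mod_cast hn)
  have hn1 : 4 * ν / D ^ 2 < (n : ℝ) :=
    lt_of_le_of_lt (le_max_left _ _ |>.trans (le_max_left _ _)) hnN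
  have hn2 : Real.log 2 / δ < (n : ℝ) :=
    lt_of_le_of_lt (le_max_right _ _ |>.trans (le_max_left _ _)) hnN
  have hn3 : 2 / ρ < (n : ℝ) :=
    lt_of_le_of_lt (le_max_right _ _) hnN
  have hnpos : (0:ℝ) < (n : ℝ) := lt_of_le_of_lt (by positivity) hn1
  constructor
  · -- main inequality
    set x : ℝ := Real.sqrt ((n : ℝ) / ν) * D with hxdef
    have hx2 : x ^ 2 = (n : ℝ) / ν * D ^ 2 := by
      rw [hxdef, mul_pow, Real.sq_sqrt (by positivity)]
    have hxsq : 4 < x ^ 2 := by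
      rw [hx2]
      have hn1' : 4 * ν < (n : ℝ) * D ^ 2 := (div_lt_iff₀ (by positivity)).mp hn1
      rw [div_mul_eq_mul_div, lt_div_iff₀ hν]
      nlinarith
    have hx0 : 0 ≤ x := by positivity
    have hxge : 2 ≤ x := by nlinarith
    have hQ : gaussQ x ≤ Real.exp (-x ^ 2 / 2) := gaussQ_le_exp hxge
    have ha0 : 0 < a := lt_trans one_pos ha
    have hpow : a ^ (2 * n) = Real.exp ((2 * n : ℕ) * Real.log a) := by
      rw [← Real.log_pow, Real.exp_log (pow_pos ha0 _)]
    have hpow1 : (1:ℝ) ≤ a ^ (2 * n) := one_le_pow₀ ha.le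
    have hbound : gaussQ x * (1 + a ^ (2 * n))
        ≤ Real.exp (-x ^ 2 / 2) * (2 * Real.exp ((2 * (n:ℝ)) * Real.log a)) := by
      have h2 : (1 : ℝ) + a ^ (2 * n) ≤ 2 * Real.exp ((2 * (n:ℝ)) * Real.log a) := by
        have : a ^ (2 * n) = Real.exp ((2 * (n:ℝ)) * Real.log a) := by
          rw [hpow]; push_cast; ring_nf
        rw [this] at hpow1 ⊢
        linarith
      have hQ0 : 0 ≤ gaussQ x := by
        unfold gaussQ
        have := setIntegral_nonneg (μ := volume) measurableSet_Ioi
          (fun u (_ : u ∈ Set.Ioi x) => (Real.exp_pos (-u ^ 2 / 2)).le)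
        positivity
      exact mul_le_mul hQ h2 (by linarith) (Real.exp_pos _).le
    have hkey : Real.exp (-x ^ 2 / 2) * (2 * Real.exp ((2 * (n:ℝ)) * Real.log a)) < 1 := by
      have hprod : Real.exp (-x ^ 2 / 2) * (2 * Real.exp ((2 * (n:ℝ)) * Real.log a))
          = 2 * Real.exp (-x ^ 2 / 2 + 2 * (n:ℝ) * Real.log a) := by
        rw [Real.exp_add]; ring
      rw [hprod]
      have harg : -x ^ 2 / 2 + 2 * (n:ℝ) * Real.log a = -((n:ℝ) * δ) := by
        rw [hx2, hδdef]
        field_simp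
        ring
      rw [harg]
      have hnδ : Real.log 2 < (n:ℝ) * δ := by
        rw [div_lt_iff₀ hδ] at hn2; linarith
      have : Real.exp (-((n:ℝ) * δ)) < Real.exp (-Real.log 2) :=
        Real.exp_lt_exp.mpr (by linarith)
      rw [Real.exp_neg, Real.exp_neg, Real.exp_log two_pos] at this
      rw [Real.exp_neg]
      linarith
    exact lt_of_le_of_lt hbound hkey
  · exact (div_lt_iff₀ hρ).mp hn3
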